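/- Let n ≥ 1 and let e be an edge of the complete graph K_{n+1}. The map induced by the contraction c_e, from the set T_{n+1}^e of spanning trees of K_{n+1} containing e to the set T_n of spanning trees of K_n, is surjective: every spanning tree of K_n is the contracted image of some spanning tree of K_{n+1} containing e. -/

import Mathlib

private lemma lift_walk_aux {V W : Type*} {G : SimpleGraph V} {G' : SimpleGraph W} (q : V → W)
    (E : Set (Sym2 V))
    (hE : ∀ ⦃x y : V⦄, G.Adj x y → s(x, y) ∈ E → G'.Adj (q x) (q y)) :
    ∀ {a b : V} (w : G.Walk a b), (∀ e ∈ w.edges, e ∈ E) →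
      ∃ p : G'.Walk (q a) (q b), p.edges = w.edges.map (Sym2.map q) ∧
        p.support = w.support.map q := by
  intro a b w
  induction w with
  | nil => exact fun _ => ⟨.nil, by simp, by simp⟩
  | cons h w ih =>
    intro he
    obtain ⟨p, hp1, hp2⟩ := ih (fun e heb => he e (by simp [heb]))
    exact ⟨.cons (hE h (he _ (by simp))) p, by simp [hp1], by simp [hp2]⟩

private lemma exists_edge_end_aux {V : Type*} {G : SimpleGraph V} :
    ∀ {a b : V} (w : G.Walk a b), a ≠ b → ∃ z, s(z, b) ∈ w.edges := by
  intro a b w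
  induction w with
  | nil => exact fun h => absurd rfl h
  | @cons a c b h w ih =>
    intro _
    by_cases hcb : c = b
    · subst hcb; exact ⟨a, by simp⟩
    · obtain ⟨z, hz⟩ := ih hcb
      exact ⟨z, by simp [hz]⟩

/-- The contraction map from spanning trees of `K_{n+1}` containing the edge
`e = s(u,v)` to spanning trees of `K_n` is surjective. -/
theorem contraction_surjective_on_spanning_trees (n : ℕ) (hn : 1 ≤ n)
    (u v : Fin (n + 1)) (huv : u ≠ v)
    (q : Fin (n + 1) → Fin n) (hq : Function.Surjective q) (hquv : q u = q v)
    (hinj : ∀ x y : Fin (n + 1), q x = q y → x = y ∨ s(x, y) = s(u, v)) :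
    ∀ T' : SimpleGraph (Fin n), T'.IsTree →
      ∃ T : SimpleGraph (Fin (n + 1)), T.IsTree ∧ s(u, v) ∈ T.edgeSet ∧
        SimpleGraph.fromEdgeSet (Sym2.map q '' (T.edgeSet \ {s(u, v)})) = T' := by
  classical
  intro T' hT'
  -- a section of `q` sending `q u` to `u`
  set g : Fin n → Fin (n + 1) := fun w => if w = q u then u else Function.surjInv hq w with hg
  have hqg : ∀ w, q (g w) = w := by
    intro w
    by_cases h : w = q u
    · simp [hg, h]
    · simp [hg, h, Function.surjInv_eq hq]
  have hginj : Function.Injective g := fun a b h => by rw [← hqg a, ← hqg b, h]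
  have hgu : g (q u) = u := by simp [hg]
  have hgv : ∀ w, g w ≠ v := by
    intro w h
    have hw : w = q v := by rw [← hqg w, h]
    rw [hw, ← hquv, hgu] at h
    exact huv h
  set E : Set (Sym2 (Fin (n + 1))) := Sym2.map g '' T'.edgeSet with hE
  set T : SimpleGraph (Fin (n + 1)) := SimpleGraph.fromEdgeSet (insert s(u, v) E) with hT
  -- basic facts
  have hqgid : q ∘ g = id := funext hqg
  have hmapE : ∀ e ∈ E, Sym2.map q e ∈ T'.edgeSet ∧ v ∉ e := by
    rintro e ⟨f, hf, rfl⟩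
    constructor
    · rw [Sym2.map_map, hqgid, Sym2.map_id]
      exact hf
    · intro hv
      obtain ⟨a, _, ha⟩ := Sym2.mem_map.mp hv
      exact hgv a ha
  have hTe : T.edgeSet = insert s(u, v) E := by
    have hnd : ∀ e ∈ insert s(u, v) E, ¬ e.IsDiag := by
      intro e he
      rcases Set.mem_insert_iff.mp he with rfl | he
      · exact fun hd => huv (Sym2.mk_isDiag_iff.mp hd)
      · obtain ⟨f, hf, rfl⟩ := he
        exact fun hd => T'.not_isDiag_of_mem_edgeSet hf ((Sym2.isDiag_map hginj).mp hd)
    rw [hT, SimpleGraph.edgeSet_fromEdgeSet]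
    ext e
    simp only [Set.mem_diff, Set.mem_setOf_eq]
    exact ⟨fun h => h.1, fun h => ⟨h, hnd e h⟩⟩
  have hsuvE : s(u, v) ∉ E := fun h => (hmapE _ h).2 (Sym2.mem_mk_right u v)
  -- adjacency of v in T
  have hvadj : ∀ w, T.Adj v w → w = u := by
    intro w h
    rw [hT, SimpleGraph.fromEdgeSet_adj] at h
    rcases Set.mem_insert_iff.mp h.1 with he | he
    · rcases Sym2.eq_iff.mp he with ⟨hv, _⟩ | ⟨_, hw⟩
      · exact absurd hv.symm huv
      · exact hw
    · exact absurd (Sym2.mem_mk_left v w) (hmapE _ he).2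
  -- adjacency along q for edges in E
  have hadjq : ∀ ⦃x y : Fin (n + 1)⦄, T.Adj x y → s(x, y) ∈ E → T'.Adj (q x) (q y) := by
    intro x y _ hxy
    have := (hmapE _ hxy).1
    rw [Sym2.map_pair_eq] at this
    exact (SimpleGraph.mem_edgeSet _).mp this
  -- hom from T' to T along g
  have hadjg : ∀ ⦃a b : Fin n⦄, T'.Adj a b → T.Adj (g a) (g b) := by
    intro a b hab
    rw [hT, SimpleGraph.fromEdgeSet_adj]
    exact ⟨Set.mem_insert_of_mem _ ⟨s(a, b), hab, Sym2.map_pair_eq g a b⟩,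
      fun h => hab.ne (hginj h)⟩
  -- connectivity
  have hconn : T.Connected := by
    have hTuv : T.Adj u v := by
      rw [hT, SimpleGraph.fromEdgeSet_adj]
      exact ⟨Set.mem_insert _ _, huv⟩
    have hpre : ∀ x, T.Reachable u x := by
      intro x
      by_cases hx : x = v
      · subst hx; exact hTuv.reachable
      · have hgx : g (q x) = x := by
          rcases hinj (g (q x)) x (by rw [hqg]) with h | h
          · exact h
          · rcases Sym2.eq_iff.mp h with ⟨_, h2⟩ | ⟨h1, _⟩
            · exact absurd h2 hx
            · exact absurd h1 (hgv _)
        have := (hT'.isConnected.preconnected (q u) (q x)).map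
          (⟨g, fun {a b} hab => hadjg hab⟩ : T' →g T)
        have h2 : T.Reachable (g (q u)) (g (q x)) := this
        rw [hgu, hgx] at h2
        exact h2
    exact SimpleGraph.Connected.mk fun x y => (hpre x).symm.trans (hpre y)
  -- v is not in the support of any cycle
  have hvsup : ∀ {x : Fin (n + 1)} (c : T.Walk x x), c.IsCycle → v ∉ c.support := by
    intro x c hc hv
    obtain ⟨c', hc'⟩ : ∃ c' : T.Walk v v, c'.IsCycle := ⟨c.rotate v hv, hc.rotate hv⟩
    cases c' with
    | nil => exact SimpleGraph.Walk.IsCycle.not_of_nil hc'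
    | cons h p =>
      have hwu : u = _ := (hvadj _ h).symm
      subst hwu
      rw [SimpleGraph.Walk.cons_isCycle_iff] at hc'
      obtain ⟨z, hz⟩ := exists_edge_end_aux p huv
      have hzu : z = u := hvadj z (p.adj_of_mem_edges hz).symm
      rw [hzu, Sym2.eq_swap] at hz
      exact hc'.2 hz
  -- acyclicity
  have hacyc : T.IsAcyclic := by
    intro x c hc
    have hv : v ∉ c.support := hvsup c hc
    have hEc : ∀ e ∈ c.edges, e ∈ E := by
      intro e he
      have heT : e ∈ T.edgeSet := c.edges_subset_edgeSet he
      rw [hTe] at heT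
      rcases Set.mem_insert_iff.mp heT with rfl | h
      · exact absurd (SimpleGraph.Walk.snd_mem_support_of_mem_edges c he) hv
      · exact h
    obtain ⟨p, hp1, hp2⟩ := lift_walk_aux q E hadjq c hEc
    have hqinj : ∀ a ∈ c.support, ∀ b ∈ c.support, q a = q b → a = b := by
      intro a ha b hb hab
      rcases hinj a b hab with h | h
      · exact h
      · rcases Sym2.eq_iff.mp h with ⟨_, h2⟩ | ⟨h1, _⟩
        · exact absurd (h2 ▸ hb) hv
        · exact absurd (h1 ▸ ha) hv
    have hpc : p.IsCycle := by
      rw [SimpleGraph.Walk.isCycle_def]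
      refine ⟨?_, ?_, ?_⟩
      · rw [SimpleGraph.Walk.isTrail_def, hp1]
        refine List.Nodup.map_on ?_ hc.isTrail.edges_nodup
        intro e1 h1 e2 h2 h12
        obtain ⟨f1, hf1, rfl⟩ := hEc e1 h1
        obtain ⟨f2, hf2, rfl⟩ := hEc e2 h2
        simp only [Sym2.map_map, hqgid, Sym2.map_id, Sym2.map_id', id_eq] at h12
        rw [h12]
      · intro hnil
        rw [hnil] at hp1
        have : c.edges = [] := by simpa using hp1.symm
        have h3 := hc.three_le_length
        rw [← SimpleGraph.Walk.length_edges, this] at h3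
        simp at h3
      · rw [hp2, ← List.map_tail]
        refine List.Nodup.map_on ?_ hc.2
        intro a ha b hb hab
        exact hqinj a (List.mem_of_mem_tail ha) b (List.mem_of_mem_tail hb) hab
    exact hT'.2 p hpc
  refine ⟨T, ⟨hconn, hacyc⟩, ?_, ?_⟩
  · rw [hTe]; exact Set.mem_insert _ _
  · have hdiff : T.edgeSet \ {s(u, v)} = E := by
      rw [hTe]
      exact Set.insert_diff_self_of_notMem hsuvE
    rw [hdiff]
    have : Sym2.map q '' E = T'.edgeSet := by
      rw [hE, Set.image_image]
      have : ∀ f, Sym2.map q (Sym2.map g f) = f := by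
        intro f; rw [Sym2.map_map, hqgid, Sym2.map_id]; rfl
      simp only [this, Set.image_id']
    rw [this, SimpleGraph.fromEdgeSet_edgeSet]
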